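/- Let E, F, G be Banach spaces, U ⊆ E × F open, and f : U → G continuously Fréchet differentiable. Let V ⊆ E be open and u : V → F be a continuous function such that for all x ∈ V: (x, u(x)) ∈ U, f(x, u(x)) = 0, and the partial derivative D₂f(x, u(x)) : F → G is a continuous linear homeomorphism. Then u is continuously Fréchet differentiable on V, and for all x ∈ V and h ∈ E, Du(x)[h] = -(D₂f(x, u(x)))⁻¹ (D₁f(x, u(x))[h]). -/

import Mathlib

open ContinuousLinearMap Topology Filter

theorem key
    {E F G : Type*} [NormedAddCommGroup E] [NormedSpace ℝ E] [CompleteSpace E]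
    [NormedAddCommGroup F] [NormedSpace ℝ F] [CompleteSpace F]
    [NormedAddCommGroup G] [NormedSpace ℝ G] [CompleteSpace G]
    (U : Set (E × F)) (hU : IsOpen U)
    (f : E × F → G) (hf : ContDiffOn ℝ 1 f U)
    (V : Set E) (hV : IsOpen V)
    (u : E → F) (hu : ContinuousOn u V)
    (hmem : ∀ x ∈ V, (x, u x) ∈ U)
    (hzero : ∀ x ∈ V, f (x, u x) = 0)
    (D2 : E → (F ≃L[ℝ] G))
    (hD2 : ∀ x ∈ V, ∀ s : F, D2 x s = fderiv ℝ f (x, u x) (0, s))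
    (x₀ : E) (hx₀ : x₀ ∈ V) :
    ContDiffAt ℝ 1 u x₀ ∧
      ∀ h : E, fderiv ℝ u x₀ h = -((D2 x₀).symm (fderiv ℝ f (x₀, u x₀) (h, 0))) := by
  set p₀ : E × F := (x₀, u x₀) with hp₀
  have hp₀U : p₀ ∈ U := hmem x₀ hx₀
  have hfc : ContDiffAt ℝ 1 f p₀ := hf.contDiffAt (hU.mem_nhds hp₀U)
  set A : (E × F) →L[ℝ] G := fderiv ℝ f p₀ with hA
  have hfd : HasStrictFDerivAt f A p₀ := hfc.hasStrictFDerivAt one_ne_zero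
  set B : F ≃L[ℝ] G := D2 x₀ with hB
  have hAB : ∀ k : F, A (0, k) = B k := fun k => (hD2 x₀ hx₀ k).symm
  have hsplit : ∀ (h : E) (k : F), A (h, k) = A (h, 0) + B k := by
    intro h k
    have : (h, k) = ((h, 0) : E × F) + (0, k) := by simp
    rw [this, map_add, hAB]
  -- the invertible derivative of g
  set M : (E × G) →L[ℝ] (E × F) :=
    (fst ℝ E G).prod ((B.symm : G →L[ℝ] F).comp ((snd ℝ E G) - A.comp ((fst ℝ E G).prod 0)))
    with hM
  set L : (E × F) ≃L[ℝ] (E × G) := ContinuousLinearEquiv.equivOfInverse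
    ((fst ℝ E F).prod A) M
    (by
      rintro ⟨h, k⟩
      simp [M, hsplit h k])
    (by
      rintro ⟨h, m⟩
      have : A (h, B.symm (m - A (h, 0))) = m := by
        rw [hsplit h (B.symm (m - A (h, 0))), B.apply_symm_apply]; abel
      simpa [M] using this) with hL
  set g : E × F → E × G := fun p => (p.1, f p) with hg
  have hgL : HasStrictFDerivAt g (L : (E × F) →L[ℝ] (E × G)) p₀ :=
    hasStrictFDerivAt_fst.prodMk hfd
  have hgc : ContDiffAt ℝ 1 g p₀ := contDiff_fst.contDiffAt.prodMk hfc
  set linv : E × G → E × F := hgL.localInverse g _ p₀ with hlinv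
  have hgp : g p₀ = (x₀, (0 : G)) := by simp [g, p₀, hzero x₀ hx₀]
  have hlinv_strict : HasStrictFDerivAt linv (L.symm : (E × G) →L[ℝ] (E × F)) (x₀, (0 : G)) := by
    rw [← hgp]; exact hgL.to_localInverse
  have hclinv : ContDiffAt ℝ 1 linv (x₀, (0 : G)) := by
    rw [← hgp]; exact hgc.to_localInverse hgL.hasFDerivAt one_ne_zero
  -- u eventually equals w
  set w : E → F := fun x => (linv (x, 0)).2 with hw
  have hcu : ContinuousAt (fun x => (x, u x)) x₀ :=
    continuousAt_id.prodMk (hu.continuousAt (hV.mem_nhds hx₀))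
  have hev : ∀ᶠ x in 𝓝 x₀, linv (g (x, u x)) = (x, u x) :=
    hcu.eventually hgL.eventually_left_inverse
  have hVev : ∀ᶠ x in 𝓝 x₀, x ∈ V := hV.mem_nhds hx₀
  have heq : u =ᶠ[𝓝 x₀] w := by
    filter_upwards [hev, hVev] with x h1 h2
    have : g (x, u x) = (x, (0 : G)) := by simp [g, hzero x h2]
    rw [this] at h1
    simp [w, h1]
  have hj : HasStrictFDerivAt (fun x : E => (x, (0 : G)))
      ((ContinuousLinearMap.id ℝ E).prod 0) x₀ :=
    (hasStrictFDerivAt_id x₀).prodMk (hasStrictFDerivAt_const 0 x₀)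
  have hw1 : HasStrictFDerivAt (fun x : E => linv (x, 0))
      ((L.symm : (E × G) →L[ℝ] (E × F)).comp ((ContinuousLinearMap.id ℝ E).prod 0)) x₀ :=
    hlinv_strict.comp x₀ hj
  have hw2 : HasStrictFDerivAt w
      ((snd ℝ E F).comp ((L.symm : (E × G) →L[ℝ] (E × F)).comp
        ((ContinuousLinearMap.id ℝ E).prod 0))) x₀ :=
    hasStrictFDerivAt_snd.comp x₀ hw1
  have hu' : HasFDerivAt u ((snd ℝ E F).comp ((L.symm : (E × G) →L[ℝ] (E × F)).comp
        ((ContinuousLinearMap.id ℝ E).prod 0))) x₀ :=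
    hw2.hasFDerivAt.congr_of_eventuallyEq heq
  constructor
  · have hcw : ContDiffAt ℝ 1 w x₀ :=
      contDiff_snd.contDiffAt.comp x₀
        (hclinv.comp x₀ (contDiffAt_id.prodMk contDiffAt_const))
    exact hcw.congr_of_eventuallyEq heq
  · intro h
    rw [hu'.fderiv]
    have hLsymm : (L.symm : (E × G) →L[ℝ] (E × F)) = M := rfl
    simp [hLsymm, M, map_sub]

/-- Implicit-function-theorem formula for the derivative of an implicitly
defined map between Banach spaces. -/
theorem stmt_0
    {E F G : Type*} [NormedAddCommGroup E] [NormedSpace ℝ E] [CompleteSpace E]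
    [NormedAddCommGroup F] [NormedSpace ℝ F] [CompleteSpace F]
    [NormedAddCommGroup G] [NormedSpace ℝ G] [CompleteSpace G]
    (U : Set (E × F)) (hU : IsOpen U)
    (f : E × F → G) (hf : ContDiffOn ℝ 1 f U)
    (V : Set E) (hV : IsOpen V)
    (u : E → F) (hu : ContinuousOn u V)
    (hmem : ∀ x ∈ V, (x, u x) ∈ U)
    (hzero : ∀ x ∈ V, f (x, u x) = 0)
    (D2 : E → (F ≃L[ℝ] G))
    (hD2 : ∀ x ∈ V, ∀ s : F, D2 x s = fderiv ℝ f (x, u x) (0, s)) :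
    ContDiffOn ℝ 1 u V ∧
      ∀ x ∈ V, ∀ h : E,
        fderiv ℝ u x h = -((D2 x).symm (fderiv ℝ f (x, u x) (h, 0))) := by
  have K := fun x hx => key U hU f hf V hV u hu hmem hzero D2 hD2 x hx
  exact ⟨fun x hx => (K x hx).1.contDiffWithinAt, fun x hx => (K x hx).2⟩
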